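/- Let T_1 be a star connection built from r stars and T_2 a star connection built from s stars (each star having at least 3 vertices), with |V(T_1)| = |V(T_2)| and r < s. Then the independence number of T_1 is strictly greater than the independence number of T_2; consequently X_{T_1} ≠ X_{T_2} as chromatic symmetric functions. -/

import Mathlib

open SimpleGraph


/-- An independent set of vertices: pairwise non-adjacent. -/
def IndepSet {V : Type*} (G : SimpleGraph V) (s : Set V) : Prop :=
  s.Pairwise fun u v => ¬ G.Adj u v

/-- The independence number of a graph: the maximum cardinality of an independent set. -/
noncomputable def indepNum {V : Type*} [Fintype V] (G : SimpleGraph V) : ℕ :=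
  sSup {k | ∃ s : Set V, IndepSet G s ∧ s.ncard = k}

/-- A leaf is a vertex of degree 1. -/
def IsLeaf {V : Type*} (G : SimpleGraph V) (v : V) : Prop :=
  (G.neighborSet v).ncard = 1

/-- The chromatic symmetric function of `G`, given by its coefficients: the coefficient of the
monomial `∏ i, x i ^ d i` is the number of proper colorings `κ : V → ℕ` whose color class of
color `i` has exactly `d i` elements, for every `i`. -/
noncomputable def csf {V : Type*} [Fintype V] (G : SimpleGraph V) : (ℕ →₀ ℕ) → ℕ :=
  fun d => Nat.card {κ : V → ℕ // (∀ u v, G.Adj u v → κ u ≠ κ v) ∧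
    ∀ i : ℕ, Nat.card {v : V // κ v = i} = d i}


open SimpleGraph

section TreeAux

variable {V : Type*} {T : SimpleGraph V}

private lemma exists_shortest_path (hconn : T.Connected) (x root : V) :
    ∃ p : T.Walk x root, p.IsPath ∧ p.length = T.dist x root := by
  classical
  obtain ⟨w, hw⟩ := hconn.exists_walk_length_eq_dist x root
  exact ⟨w.bypass, w.bypass_isPath,
    le_antisymm (le_trans w.length_bypass_le hw.le) (SimpleGraph.dist_le _)⟩

private lemma not_mem_of_short {x y root : V} (p : T.Walk y root)
    (hp : p.length < T.dist x root) : x ∉ p.support := by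
  classical
  intro hx
  have h1 : T.dist x root ≤ (p.dropUntil x hx).length := SimpleGraph.dist_le _
  have h2 := congrArg Walk.length (p.take_spec hx)
  rw [Walk.length_append] at h2
  omega

private lemma child_unique (hT : T.IsTree) (root x y₁ y₂ : V)
    (h₁ : T.Adj x y₁) (h₂ : T.Adj x y₂)
    (hd₁ : T.dist y₁ root < T.dist x root) (hd₂ : T.dist y₂ root < T.dist x root) :
    y₁ = y₂ := by
  obtain ⟨p₁, hp₁, hl₁⟩ := exists_shortest_path hT.isConnected y₁ root
  obtain ⟨p₂, hp₂, hl₂⟩ := exists_shortest_path hT.isConnected y₂ root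
  have hx₁ : x ∉ p₁.support := not_mem_of_short p₁ (by omega)
  have hx₂ : x ∉ p₂.support := not_mem_of_short p₂ (by omega)
  have heq := hT.IsAcyclic.path_unique
    ⟨Walk.cons h₁ p₁, hp₁.cons hx₁⟩ ⟨Walk.cons h₂ p₂, hp₂.cons hx₂⟩
  have h := congrArg (fun q : T.Path x root => (q : T.Walk x root).getVert 1) heq
  simpa [Walk.getVert_cons] using h

private lemma adj_dist_ne (hT : T.IsTree) (root x y : V) (h : T.Adj x y) :
    T.dist x root ≠ T.dist y root := by
  classical
  intro heq
  obtain ⟨p, hp, hl⟩ := exists_shortest_path hT.isConnected x root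
  have hy : y ∉ p.support := by
    intro hy
    have h1 : T.dist y root ≤ (p.dropUntil y hy).length := SimpleGraph.dist_le _
    have h2 := congrArg Walk.length (p.take_spec hy)
    rw [Walk.length_append] at h2
    have h3 : (p.takeUntil y hy).length = 0 := by omega
    exact h.ne (Walk.eq_of_length_eq_zero h3)
  obtain ⟨p', hp', hl'⟩ := exists_shortest_path hT.isConnected y root
  have heq2 := hT.IsAcyclic.path_unique ⟨Walk.cons h.symm p, hp.cons hy⟩ ⟨p', hp'⟩
  have hlen := congrArg (fun q : T.Path y root => (q : T.Walk y root).length) heq2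
  simp only [Walk.length_cons] at hlen
  omega

end TreeAux

private lemma indep_bddAbove {V : Type*} [Fintype V] (G : SimpleGraph V) :
    BddAbove {k | ∃ s : Set V, IndepSet G s ∧ s.ncard = k} := by
  refine ⟨Fintype.card V, ?_⟩
  rintro k ⟨s, _, rfl⟩
  calc s.ncard ≤ (Set.univ : Set V).ncard :=
        Set.ncard_le_ncard (Set.subset_univ s) Set.finite_univ
    _ = Fintype.card V := by rw [Set.ncard_univ, Nat.card_eq_fintype_card]

private lemma indep_nonempty {V : Type*} [Fintype V] (G : SimpleGraph V) :
    ({k | ∃ s : Set V, IndepSet G s ∧ s.ncard = k}).Nonempty :=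
  ⟨0, ∅, Set.pairwise_empty _, by simp⟩

private lemma exists_inj_rep {V : Type*} [Fintype V] (T : SimpleGraph V) (r : ℕ)
    (n : Fin r → ℕ) (c : Fin r → V) (S : Fin r → Set V)
    (hn : ∀ i, 3 ≤ n i) (hScard : ∀ i, (S i).ncard = n i) (hcmem : ∀ i, c i ∈ S i)
    (hAdj : ∀ u v, T.Adj u v ↔ ∃ i, u ≠ v ∧ ((u = c i ∧ v ∈ S i) ∨ (v = c i ∧ u ∈ S i)))
    (hcenter : ∀ i j, c i ∈ S j → j = i) (htree : T.IsTree) :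
    ∃ v : Fin r → V, Function.Injective v ∧ ∀ i, v i ∈ S i ∧ v i ≠ c i := by
  obtain ⟨root⟩ := htree.isConnected.nonempty
  have hadj_of : ∀ i y, y ∈ S i → y ≠ c i → T.Adj (c i) y := fun i y hy hne =>
    (hAdj _ _).mpr ⟨i, Ne.symm hne, Or.inl ⟨rfl, hy⟩⟩
  have key : ∀ i, ∃ y, y ∈ S i ∧ y ≠ c i ∧ T.dist (c i) root < T.dist y root := by
    intro i
    by_contra hcon
    push_neg at hcon
    have hlt : ∀ y, y ∈ S i → y ≠ c i → T.dist y root < T.dist (c i) root := by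
      intro y hy hne
      have h1 := adj_dist_ne htree root (c i) y (hadj_of i y hy hne)
      have h2 := hcon y hy hne
      omega
    have h2 : 1 < (S i \ {c i}).ncard := by
      rw [Set.ncard_diff_singleton_of_mem (hcmem i), hScard i]
      have := hn i; omega
    obtain ⟨a, b, ha, hb, hab⟩ := (Set.one_lt_ncard_iff (Set.toFinite _)).mp h2
    rw [Set.mem_diff, Set.mem_singleton_iff] at ha hb
    exact hab (child_unique htree root (c i) a b (hadj_of i a ha.1 ha.2)
      (hadj_of i b hb.1 hb.2) (hlt a ha.1 ha.2) (hlt b hb.1 hb.2))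
  choose v hv1 hv2 hv3 using key
  refine ⟨v, ?_, fun i => ⟨hv1 i, hv2 i⟩⟩
  intro i j hij
  have h₁ : T.Adj (v i) (c i) := (hadj_of i _ (hv1 i) (hv2 i)).symm
  have h₂ : T.Adj (v i) (c j) := by
    rw [hij]; exact (hadj_of j _ (hv1 j) (hv2 j)).symm
  have hd₂ : T.dist (c j) root < T.dist (v i) root := by rw [hij]; exact hv3 j
  have hcc : c i = c j := child_unique htree root (v i) (c i) (c j) h₁ h₂ (hv3 i) hd₂
  have hmem : c i ∈ S j := by rw [hcc]; exact hcmem j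
  exact (hcenter i j hmem).symm

private lemma indepNum_le_aux {V : Type*} [Fintype V] (T : SimpleGraph V) (r : ℕ)
    (n : Fin r → ℕ) (c : Fin r → V) (S : Fin r → Set V)
    (hn : ∀ i, 3 ≤ n i) (hScard : ∀ i, (S i).ncard = n i) (hcmem : ∀ i, c i ∈ S i)
    (hAdj : ∀ u v, T.Adj u v ↔ ∃ i, u ≠ v ∧ ((u = c i ∧ v ∈ S i) ∨ (v = c i ∧ u ∈ S i)))
    (hcenter : ∀ i j, c i ∈ S j → j = i) (htree : T.IsTree) :
    _root_.indepNum T ≤ Fintype.card V - r := by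
  classical
  obtain ⟨v, hvinj, hv⟩ := exists_inj_rep T r n c S hn hScard hcmem hAdj hcenter htree
  apply csSup_le (indep_nonempty T)
  rintro k ⟨A, hA, rfl⟩
  have hadj_of : ∀ i y, y ∈ S i → y ≠ c i → T.Adj (c i) y := fun i y hy hne =>
    (hAdj _ _).mpr ⟨i, Ne.symm hne, Or.inl ⟨rfl, hy⟩⟩
  have hgmem : ∀ i, (if c i ∈ A then v i else c i) ∈ Aᶜ := by
    intro i
    by_cases hci : c i ∈ A
    · simp only [hci, if_true, Set.mem_compl_iff]
      intro hvi
      exact hA hci hvi (Ne.symm (hv i).2) (hadj_of i _ (hv i).1 (hv i).2)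
    · simp [hci]
  have hginj : Function.Injective (fun i => (⟨_, hgmem i⟩ : ↥(Aᶜ))) := by
    intro i j hij
    have hij' : (if c i ∈ A then v i else c i) = (if c j ∈ A then v j else c j) :=
      congrArg Subtype.val hij
    by_cases hci : c i ∈ A <;> by_cases hcj : c j ∈ A <;>
      simp only [hci, hcj, if_true, if_false] at hij'
    · exact hvinj hij'
    · -- v i = c j
      have : c j ∈ S i := hij' ▸ (hv i).1
      have hji : i = j := hcenter j i this
      exact absurd (hji ▸ hci) hcj
    · have : c i ∈ S j := hij'.symm ▸ (hv j).1
      have hji : j = i := hcenter i j this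
      exact absurd (hji ▸ hcj) hci
    · have : c i ∈ S j := hij' ▸ hcmem j
      exact (hcenter i j this).symm
  have hr : r ≤ (Aᶜ).ncard := by
    have h1 := Fintype.card_le_of_injective _ hginj
    rw [Fintype.card_fin] at h1
    rwa [← Nat.card_coe_set_eq, Nat.card_eq_fintype_card]
  have h2 := Set.ncard_add_ncard_compl A
  rw [Nat.card_eq_fintype_card] at h2
  omega

private lemma indepNum_ge_aux {V : Type*} [Fintype V] (T : SimpleGraph V) (r : ℕ)
    (c : Fin r → V)
    (hAdj : ∀ u v, T.Adj u v → ∃ i, u = c i ∨ v = c i) :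
    Fintype.card V - r ≤ _root_.indepNum T := by
  classical
  have hA : IndepSet T ((Set.range c)ᶜ) := by
    intro u hu v hv _ hadj
    obtain ⟨i, hi⟩ := hAdj u v hadj
    cases hi with
    | inl h => exact hu ⟨i, h.symm⟩
    | inr h => exact hv ⟨i, h.symm⟩
  have h2 : (Set.range c).ncard ≤ r := by
    calc (Set.range c).ncard = (c '' Set.univ).ncard := by rw [Set.image_univ]
      _ ≤ (Set.univ : Set (Fin r)).ncard := Set.ncard_image_le Set.finite_univ
      _ = r := by rw [Set.ncard_univ, Nat.card_eq_fintype_card, Fintype.card_fin]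
  have h3 := Set.ncard_add_ncard_compl (Set.range c)
  have h4 : Fintype.card V - r ≤ ((Set.range c)ᶜ).ncard := by
    rw [← Nat.card_eq_fintype_card]; omega
  exact le_trans h4 (le_csSup (indep_bddAbove T) ⟨_, hA, rfl⟩)

private lemma indepNum_le_of_csf_eq {V₁ V₂ : Type*} [Fintype V₁] [Fintype V₂]
    (G₁ : SimpleGraph V₁) (G₂ : SimpleGraph V₂) (h : csf G₁ = csf G₂) :
    _root_.indepNum G₁ ≤ _root_.indepNum G₂ := by
  classical
  obtain ⟨A, hA, hAcard⟩ := Nat.sSup_mem (indep_nonempty G₁) (indep_bddAbove G₁)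
  let e := Fintype.equivFin V₁
  let κ : V₁ → ℕ := fun v => if v ∈ A then 0 else (e v : ℕ) + 1
  have hκA : ∀ v, κ v = 0 ↔ v ∈ A := by
    intro v; by_cases hv : v ∈ A <;> simp [κ, hv]
  have hκproper : ∀ u v, G₁.Adj u v → κ u ≠ κ v := by
    intro u v huv heq
    by_cases hu : u ∈ A <;> by_cases hvv : v ∈ A <;> simp [κ, hu, hvv] at heq
    · exact hA hu hvv huv.ne huv
    · exact huv.ne (e.injective (Fin.val_injective heq))
  let f : ℕ → ℕ := fun i => Nat.card {v : V₁ // κ v = i}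
  have hfsupp : (Function.support f).Finite := by
    apply Set.Finite.subset (Set.finite_range κ)
    intro i hi
    rw [Function.mem_support] at hi
    by_contra hcon
    apply hi
    have hie : IsEmpty {v : V₁ // κ v = i} := ⟨fun w => hcon ⟨w.1, w.2⟩⟩
    simp only [f, Nat.card_of_isEmpty]
  let d : ℕ →₀ ℕ := Finsupp.ofSupportFinite f hfsupp
  have hd : ∀ i, d i = f i := fun i => rfl
  have hmemd : ∀ (κ' : V₂ → ℕ), (∀ i : ℕ, Nat.card {v : V₂ // κ' v = i} = d i) →
      ∀ v, κ' v ∈ d.support := by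
    intro κ' hκ' v
    rw [Finsupp.mem_support_iff, ← hκ' (κ' v)]
    have hne : Nonempty {w : V₂ // κ' w = κ' v} := ⟨⟨v, rfl⟩⟩
    exact Nat.card_ne_zero.mpr ⟨hne, inferInstance⟩
  have hmemd₁ : ∀ (κ' : V₁ → ℕ), (∀ i : ℕ, Nat.card {v : V₁ // κ' v = i} = d i) →
      ∀ v, κ' v ∈ d.support := by
    intro κ' hκ' v
    rw [Finsupp.mem_support_iff, ← hκ' (κ' v)]
    have hne : Nonempty {w : V₁ // κ' w = κ' v} := ⟨⟨v, rfl⟩⟩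
    exact Nat.card_ne_zero.mpr ⟨hne, inferInstance⟩
  have h1 : csf G₁ d ≠ 0 := by
    unfold csf
    apply Nat.card_ne_zero.mpr
    refine ⟨⟨⟨κ, hκproper, fun i => (hd i).symm⟩⟩, ?_⟩
    apply Finite.of_injective (β := V₁ → {x // x ∈ d.support})
      (fun κ' => fun v => ⟨κ'.1 v, hmemd₁ κ'.1 κ'.2.2 v⟩)
    intro x y hxy
    apply Subtype.ext
    funext v
    exact congrArg Subtype.val (congrFun hxy v)
  rw [h] at h1
  have h2 : Nonempty {κ' : V₂ → ℕ // (∀ u v, G₂.Adj u v → κ' u ≠ κ' v) ∧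
      ∀ i, Nat.card {v : V₂ // κ' v = i} = d i} := by
    by_contra hcon
    rw [not_nonempty_iff] at hcon
    exact h1 (by unfold csf; exact Nat.card_of_isEmpty)
  obtain ⟨⟨κ₂, hp₂, hc₂⟩⟩ := h2
  have hBind : IndepSet G₂ {v | κ₂ v = 0} := fun u hu v hv _ hadj =>
    hp₂ u v hadj (hu.trans hv.symm)
  have hBcard : ({v | κ₂ v = 0} : Set V₂).ncard = _root_.indepNum G₁ := by
    have h3 : Nat.card {v : V₂ // κ₂ v = 0} = d 0 := hc₂ 0
    have h4 : (d 0 : ℕ) = _root_.indepNum G₁ := by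
      rw [hd]
      show Nat.card {v : V₁ // κ v = 0} = _root_.indepNum G₁
      rw [Nat.card_congr (Equiv.subtypeEquivRight hκA), Nat.card_coe_set_eq]
      exact hAcard
    rw [← Nat.card_coe_set_eq]
    exact h3.trans h4
  exact le_csSup (indep_bddAbove G₂) ⟨_, hBind, hBcard⟩

/-- If `T₁` is a star connection built from `r` stars and `T₂` one built from `s` stars
(each star on at least 3 vertices), with the same number of vertices and `r < s`, then
`T₁` has strictly larger independence number, and consequently the chromatic symmetric
functions differ. -/
theorem starConnection_csf_ne {V₁ V₂ : Type*} [Fintype V₁] [Fintype V₂]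
    (T₁ : SimpleGraph V₁) (r : ℕ) (n₁ : Fin r → ℕ) (c₁ : Fin r → V₁) (S₁ : Fin r → Set V₁)
    (T₂ : SimpleGraph V₂) (s : ℕ) (n₂ : Fin s → ℕ) (c₂ : Fin s → V₂) (S₂ : Fin s → Set V₂)
    (hr : 2 ≤ r) (hn₁ : ∀ i, 3 ≤ n₁ i)
    (hScard₁ : ∀ i, (S₁ i).ncard = n₁ i)
    (hcmem₁ : ∀ i, c₁ i ∈ S₁ i)
    (hcover₁ : ∀ v, ∃ i, v ∈ S₁ i)
    (hAdj₁ : ∀ u v, T₁.Adj u v ↔ ∃ i, u ≠ v ∧ ((u = c₁ i ∧ v ∈ S₁ i) ∨ (v = c₁ i ∧ u ∈ S₁ i)))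
    (hinter₁ : ∀ i j, i ≠ j → (S₁ i ∩ S₁ j).Subsingleton)
    (hcenter₁ : ∀ i j, c₁ i ∈ S₁ j → j = i)
    (htree₁ : T₁.IsTree)
    (hs : 2 ≤ s) (hn₂ : ∀ i, 3 ≤ n₂ i)
    (hScard₂ : ∀ i, (S₂ i).ncard = n₂ i)
    (hcmem₂ : ∀ i, c₂ i ∈ S₂ i)
    (hcover₂ : ∀ v, ∃ i, v ∈ S₂ i)
    (hAdj₂ : ∀ u v, T₂.Adj u v ↔ ∃ i, u ≠ v ∧ ((u = c₂ i ∧ v ∈ S₂ i) ∨ (v = c₂ i ∧ u ∈ S₂ i)))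
    (hinter₂ : ∀ i j, i ≠ j → (S₂ i ∩ S₂ j).Subsingleton)
    (hcenter₂ : ∀ i j, c₂ i ∈ S₂ j → j = i)
    (htree₂ : T₂.IsTree)
    (hcard : Fintype.card V₁ = Fintype.card V₂) (hrs : r < s) :
    _root_.indepNum T₁ > _root_.indepNum T₂ ∧ csf T₁ ≠ csf T₂ := by
  have hub := indepNum_le_aux T₂ s n₂ c₂ S₂ hn₂ hScard₂ hcmem₂ hAdj₂ hcenter₂ htree₂
  have hlb := indepNum_ge_aux T₁ r c₁ (fun u v huv => by
    obtain ⟨i, _, h⟩ := (hAdj₁ u v).mp huv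
    exact ⟨i, h.imp And.left And.left⟩)
  have hsN : s ≤ Fintype.card V₂ := by
    have hinj : Function.Injective c₂ := by
      intro i j hij
      have : c₂ i ∈ S₂ j := by rw [hij]; exact hcmem₂ j
      exact (hcenter₂ i j this).symm
    simpa using Fintype.card_le_of_injective c₂ hinj
  have hgt : _root_.indepNum T₂ < _root_.indepNum T₁ := by omega
  exact ⟨hgt, fun hcsf => absurd (indepNum_le_of_csf_eq T₁ T₂ hcsf) (not_le.mpr hgt)⟩
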